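/- Let A be a commutative complex Banach algebra with identity 1, let a ∈ A, and let b be a recurrent vector for M_a, witnessed by a strictly increasing sequence (n_k) of positive integers with a^{n_k} b → b in A. If the zero set Z(b̂) = {φ ∈ X : φ(b) = 0} has empty interior in the maximal ideal space X, then |φ(a)| = 1 for every φ ∈ X; in particular a is invertible in A. -/

import Mathlib

open Filter Topology

/-- If `b` is a recurrent vector for the multiplication operator `M_a`
on a commutative complex Banach algebra `A` and the zero set of the Gelfand transform of
`b` has empty interior in the character space of `A`, then `|φ(a)| = 1` for every
character `φ`; in particular `a` is invertible in `A`. -/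
theorem gelfand_unimodular_of_recurrent_vector
    (A : Type*) [NormedCommRing A] [NormedAlgebra ℂ A] [CompleteSpace A]
    (a b : A) (n : ℕ → ℕ) (hmono : StrictMono n) (hpos : ∀ k, 0 < n k)
    (hb : Tendsto (fun k => a ^ n k * b) atTop (𝓝 b))
    (hZ : interior {φ : WeakDual.characterSpace ℂ A | φ b = 0} = ∅) :
    (∀ φ : WeakDual.characterSpace ℂ A, ‖φ a‖ = 1) ∧ IsUnit a := by
  -- the sequence `n k` tends to infinity
  have hn : Tendsto n atTop atTop := hmono.tendsto_atTop
  -- on the complement of the zero set, `|φ a| = 1`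
  have key : ∀ φ : WeakDual.characterSpace ℂ A, φ b ≠ 0 → ‖φ a‖ = 1 := by
    intro φ hφb
    -- φ is continuous, so push the limit through
    have hcont : Continuous (φ : A → ℂ) := map_continuous φ
    have h1 : Tendsto (fun k => (φ a) ^ n k * φ b) atTop (𝓝 (φ b)) := by
      have := (hcont.tendsto b).comp hb
      simpa [Function.comp_def, map_mul, map_pow] using this
    have h2 : Tendsto (fun k => (φ a) ^ n k) atTop (𝓝 1) := by
      have := h1.div_const (φ b)
      simpa [mul_div_assoc, div_self hφb] using this
    have h3 : Tendsto (fun k => ‖φ a‖ ^ n k) atTop (𝓝 1) := by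
      have := (continuous_norm.tendsto 1).comp h2
      simpa [Function.comp_def, map_pow] using this
    by_contra hne
    rcases lt_or_gt_of_ne hne with hlt | hgt
    · have h0 : Tendsto (fun k => ‖φ a‖ ^ n k) atTop (𝓝 0) :=
        (tendsto_pow_atTop_nhds_zero_of_lt_one (norm_nonneg _) hlt).comp hn
      exact one_ne_zero (tendsto_nhds_unique h3 h0)
    · have h0 : Tendsto (fun k => ‖φ a‖ ^ n k) atTop atTop :=
        (tendsto_pow_atTop_atTop_of_one_lt hgt).comp hn
      exact not_tendsto_nhds_of_tendsto_atTop h0 1 h3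
  -- the set where `|φ a| = 1` is closed and contains a dense set
  have habs : ∀ φ : WeakDual.characterSpace ℂ A, ‖φ a‖ = 1 := by
    have hdense : Dense {φ : WeakDual.characterSpace ℂ A | φ b = 0}ᶜ :=
      interior_eq_empty_iff_dense_compl.mp hZ
    have hclosed : IsClosed {φ : WeakDual.characterSpace ℂ A | ‖φ a‖ = 1} := by
      have hc : Continuous fun φ : WeakDual.characterSpace ℂ A => (φ a : ℂ) :=
        (WeakDual.eval_continuous a).comp continuous_subtype_val
      exact isClosed_eq (continuous_norm.comp hc) continuous_const
    have hsub : {φ : WeakDual.characterSpace ℂ A | φ b = 0}ᶜ ⊆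
        {φ : WeakDual.characterSpace ℂ A | ‖φ a‖ = 1} := fun φ h => key φ h
    have hS : Dense {φ : WeakDual.characterSpace ℂ A | ‖φ a‖ = 1} :=
      hdense.mono hsub
    intro φ
    have : φ ∈ {φ' : WeakDual.characterSpace ℂ A | ‖φ' a‖ = 1} := by
      rw [← hclosed.closure_eq]; exact hS φ
    exact this
  refine ⟨habs, ?_⟩
  by_contra hu
  obtain ⟨φ, hφ⟩ := WeakDual.CharacterSpace.exists_apply_eq_zero hu
  have := habs φ
  rw [hφ] at this
  simp at this
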